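/- Let C be a category with a terminal object 1 that is well-pointed, i.e., for every pair of morphisms f, g : A → B with f ≠ g there exists p : 1 → A with f ∘ p ≠ g ∘ p. If C carries a monoidal structure with tensor ⊗ and unit object I, then the unique morphism I → 1 is a monomorphism. -/

import Mathlib

open CategoryTheory CategoryTheory.Limits MonoidalCategory

/-- Any two global points of the monoidal unit are equal. -/
lemma unit_points_eq {C : Type u} [Category.{v} C] [MonoidalCategory C] [HasTerminal C]
    (x y : ⊤_ C ⟶ 𝟙_ C) : x = y := by
  -- q1 and q2 are maps T ⊗ T → T, hence equal.
  set q1 : (⊤_ C) ⊗ (⊤_ C) ⟶ ⊤_ C := (x ▷ (⊤_ C)) ≫ (λ_ (⊤_ C)).hom with hq1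
  set q2 : (⊤_ C) ⊗ (⊤_ C) ⟶ ⊤_ C := ((⊤_ C) ◁ y) ≫ (ρ_ (⊤_ C)).hom with hq2
  have hq : q1 = q2 := Subsingleton.elim _ _
  have h1 : (x ⊗ₘ y) ≫ (λ_ (𝟙_ C)).hom = q1 ≫ y := by
    rw [hq1, MonoidalCategory.tensorHom_def, Category.assoc, leftUnitor_naturality, Category.assoc]
  have h2 : (x ⊗ₘ y) ≫ (ρ_ (𝟙_ C)).hom = q2 ≫ x := by
    rw [hq2, MonoidalCategory.tensorHom_def', Category.assoc, rightUnitor_naturality, Category.assoc]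
  have h3 : q1 ≫ y = q2 ≫ x := by
    rw [← h1, ← h2, unitors_equal]
  -- a section of q1 (any map T → T ⊗ T works)
  set s : (⊤_ C) ⟶ (⊤_ C) ⊗ (⊤_ C) :=
    (λ_ (⊤_ C)).inv ≫ (terminal.from (𝟙_ C) ▷ (⊤_ C)) with hs
  have hsq1 : s ≫ q1 = 𝟙 (⊤_ C) := Subsingleton.elim _ _
  have hsq2 : s ≫ q2 = 𝟙 (⊤_ C) := Subsingleton.elim _ _
  calc x = (s ≫ q2) ≫ x := by rw [hsq2, Category.id_comp]
    _ = s ≫ (q2 ≫ x) := Category.assoc _ _ _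
    _ = s ≫ (q1 ≫ y) := by rw [h3]
    _ = (s ≫ q1) ≫ y := (Category.assoc _ _ _).symm
    _ = y := by rw [hsq1, Category.id_comp]

/-- If `C` is a well-pointed category (equality of morphisms is detected by global
points of the domain) carrying a monoidal structure with unit `I = 𝟙_ C`, then the
unique morphism from the unit to the terminal object is a monomorphism. -/
theorem unit_to_terminal_mono {C : Type u} [Category.{v} C] [MonoidalCategory C]
    [HasTerminal C]
    (well_pointed : ∀ {A B : C} (f g : A ⟶ B), f ≠ g → ∃ p : ⊤_ C ⟶ A, p ≫ f ≠ p ≫ g) :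
    Mono (terminal.from (𝟙_ C)) := by
  constructor
  intro A f g _
  by_contra hne
  obtain ⟨p, hp⟩ := well_pointed f g hne
  exact hp (unit_points_eq (p ≫ f) (p ≫ g))
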